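/- Let 0 ≤ h ≤ α and β ∈ 𝓑(α). Then Φ_h(β) = inf{ξ ∈ 𝓑̄_h(α) : ξ ≥ β}; that is, Φ_h(β) is the least element of 𝓑̄_h(α) dominating β pointwise. Consequently, Φ_h : 𝓑(α) → 𝓑̄_h(α) is surjective, idempotent, and the identity on 𝓑̄_h(α). -/
import Mathlib


open Set Filter

/-- The space `𝓑`: functions on `Δ = {(u,v) : 0 ≤ v ≤ u}` with `ψ(u,u)=0`, nonnegative,
subadditive, increasing in the first variable and decreasing in the second. -/
def MemB (ψ : ℝ → ℝ → ℝ) : Prop :=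
  (∀ u, 0 ≤ u → ψ u u = 0) ∧
  (∀ u v, 0 ≤ v → v ≤ u → 0 ≤ ψ u v) ∧
  (∀ u w v, 0 ≤ v → v ≤ w → w ≤ u → ψ u v ≤ ψ u w + ψ w v) ∧
  (∀ u w v, 0 ≤ v → v ≤ w → w ≤ u → ψ w v ≤ ψ u v) ∧
  (∀ u w v, 0 ≤ v → v ≤ w → w ≤ u → ψ u w ≤ ψ u v)

/-- The space `𝓑(α)`: members of `𝓑` which are `α`-Lipschitz for the `L¹` metric on `Δ`. -/
def MemBLip (α : ℝ) (ψ : ℝ → ℝ → ℝ) : Prop :=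
  MemB ψ ∧ ∀ u v u' v', 0 ≤ v → v ≤ u → 0 ≤ v' → v' ≤ u' →
    |ψ u v - ψ u' v'| ≤ α * (|u - u'| + |v - v'|)

/-- The space `𝓑̄_h(α)`: members of `𝓑(α)` which are increasing along diagonals and whose
restriction to the bottom edge grows at least at rate `h`. -/
def MemBbar (h α : ℝ) (ψ : ℝ → ℝ → ℝ) : Prop :=
  MemBLip α ψ ∧
  (∀ u v z, 0 ≤ v → v ≤ u → 0 ≤ z → ψ u v ≤ ψ (u + z) (v + z)) ∧
  (∀ u v, 0 ≤ v → v ≤ u → h * (u - v) ≤ ψ u 0 - ψ v 0)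

/-- The space `𝓖`: decreasing nonnegative functions on `[0,1]` vanishing at `1` with
`γ(λθ) ≤ γ(θ) + θγ(λ)`. -/
def MemG (γ : ℝ → ℝ) : Prop :=
  γ 1 = 0 ∧ (∀ θ, 0 ≤ θ → θ ≤ 1 → 0 ≤ γ θ) ∧
  (∀ a b, 0 ≤ a → a ≤ b → b ≤ 1 → γ b ≤ γ a) ∧
  (∀ l t, 0 ≤ l → l ≤ 1 → 0 ≤ t → t ≤ 1 → γ (l * t) ≤ γ t + t * γ l)

/-- The space `𝓖(α)`: `α`-Lipschitz members of `𝓖`. -/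
def MemGLip (α : ℝ) (γ : ℝ → ℝ) : Prop :=
  MemG γ ∧ ∀ a b, 0 ≤ a → a ≤ 1 → 0 ≤ b → b ≤ 1 → |γ a - γ b| ≤ α * |a - b|

/-- The space `𝓖̄_h(α)`: members of `𝓖(α)` with `γ(0) ≥ h` and `θ ↦ γ(θ)/(1-θ)` increasing. -/
def MemGbar (h α : ℝ) (γ : ℝ → ℝ) : Prop :=
  MemGLip α γ ∧ h ≤ γ 0 ∧
  ∀ a b, 0 ≤ a → a ≤ b → b < 1 → γ a / (1 - a) ≤ γ b / (1 - b)

/-- The normalized limit `Γ(ψ)(θ) = limsup_{u→∞} ψ(u,θu)/u`. -/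
noncomputable def Gam (ψ : ℝ → ℝ → ℝ) (θ : ℝ) : ℝ :=
  Filter.limsup (fun u => ψ u (θ * u) / u) Filter.atTop

/-- The projection `Φ_h(β)(u,v) = max_{0 ≤ z ≤ u}` of `β(u-z,v-z)` for `z ≤ v` and
`h(z-v) + β(u-z,0)` for `v ≤ z ≤ u`. -/
noncomputable def Phi (h : ℝ) (β : ℝ → ℝ → ℝ) (u v : ℝ) : ℝ :=
  sSup ((fun z => if z ≤ v then β (u - z) (v - z) else h * (z - v) + β (u - z) 0) ''
    Set.Icc 0 u)

/-- The projection `Ω_h(γ)(θ) = (1-θ)·max{h, max_{0 ≤ λ ≤ θ} γ(λ)/(1-λ)}`. -/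
noncomputable def Om (h : ℝ) (γ : ℝ → ℝ) (θ : ℝ) : ℝ :=
  (1 - θ) * max h (sSup ((fun l => γ l / (1 - l)) '' Set.Icc 0 θ))

/-- The space `𝓒(α)`: increasing `α`-Lipschitz functions `g : [0,∞) → [0,∞)` with `g(0)=0`. -/
def MemC (α : ℝ) (g : ℝ → ℝ) : Prop :=
  g 0 = 0 ∧ (∀ u, 0 ≤ u → 0 ≤ g u) ∧ (∀ a b, 0 ≤ a → a ≤ b → g a ≤ g b) ∧
  (∀ a b, 0 ≤ a → 0 ≤ b → |g a - g b| ≤ α * |a - b|)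

section PhiAux

variable {h α : ℝ} {β : ℝ → ℝ → ℝ}

/-- The function whose sup over `[0,u]` defines `Phi`. -/
noncomputable def Fz (h : ℝ) (β : ℝ → ℝ → ℝ) (u v z : ℝ) : ℝ :=
  if z ≤ v then β (u - z) (v - z) else h * (z - v) + β (u - z) 0

lemma phi_def (h : ℝ) (β : ℝ → ℝ → ℝ) (u v : ℝ) :
    Phi h β u v = sSup (Fz h β u v '' Set.Icc 0 u) := rfl

lemma lip' (hβ : MemBLip α β) {u v u' v' : ℝ} (hv : 0 ≤ v) (hvu : v ≤ u)
    (hv' : 0 ≤ v') (hvu' : v' ≤ u') :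
    β u v ≤ β u' v' + α * (|u - u'| + |v - v'|) := by
  have H := hβ.2 u v u' v' hv hvu hv' hvu'
  have h2 := (le_abs_self (β u v - β u' v')).trans H
  linarith

lemma beta_edge_le (hβ : MemBLip α β) {w : ℝ} (hw : 0 ≤ w) :
    β w 0 ≤ α * w := by
  have H := lip' hβ (u := w) (v := 0) (u' := 0) (v' := 0) le_rfl hw le_rfl le_rfl
  rw [hβ.1.1 0 le_rfl, sub_zero, sub_zero, abs_zero, abs_of_nonneg hw] at H
  linarith

lemma F_le_bound (hh : 0 ≤ h) (hhα : h ≤ α) (hβ : MemBLip α β)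
    {u v : ℝ} (hv : 0 ≤ v) (hvu : v ≤ u) {z : ℝ} (hz : z ∈ Set.Icc 0 u) :
    Fz h β u v z ≤ β u 0 + α * u := by
  obtain ⟨⟨hzero, hnn, hsub, hinc, hdec⟩, hlip⟩ := id hβ
  obtain ⟨hz0, hzu⟩ := hz
  have hα : 0 ≤ α := hh.trans hhα
  have hu : 0 ≤ u := hv.trans hvu
  unfold Fz
  split_ifs with hle
  · have h1 : β (u - z) (v - z) ≤ β (u - z) 0 :=
      hdec (u - z) (v - z) 0 le_rfl (by linarith) (by linarith)
    have h2 : β (u - z) 0 ≤ β u 0 := hinc u (u - z) 0 le_rfl (by linarith) (by linarith)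
    nlinarith [mul_nonneg hα hu]
  · push_neg at hle
    have h1 : β (u - z) 0 ≤ β u 0 := hinc u (u - z) 0 le_rfl (by linarith) (by linarith)
    have h2 : h * (z - v) ≤ α * (z - v) := mul_le_mul_of_nonneg_right hhα (by linarith)
    have h3 : α * (z - v) ≤ α * u := mul_le_mul_of_nonneg_left (by linarith) hα
    linarith

lemma le_phi (hh : 0 ≤ h) (hhα : h ≤ α) (hβ : MemBLip α β)
    {u v z : ℝ} (hv : 0 ≤ v) (hvu : v ≤ u) (hz : z ∈ Set.Icc 0 u) :
    Fz h β u v z ≤ Phi h β u v := by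
  rw [phi_def]
  refine le_csSup ⟨β u 0 + α * u, ?_⟩ ⟨z, hz, rfl⟩
  rintro x ⟨w, hw, rfl⟩
  exact F_le_bound hh hhα hβ hv hvu hw

lemma phi_le {u v c : ℝ} (hv : 0 ≤ v) (hvu : v ≤ u)
    (hc : ∀ z ∈ Set.Icc 0 u, Fz h β u v z ≤ c) : Phi h β u v ≤ c := by
  rw [phi_def]
  refine csSup_le ⟨Fz h β u v 0, ⟨0, ⟨le_rfl, hv.trans hvu⟩, rfl⟩⟩ ?_
  rintro x ⟨w, hw, rfl⟩
  exact hc w hw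

lemma diag_le_phi (hh : 0 ≤ h) (hhα : h ≤ α) (hβ : MemBLip α β)
    {u v z : ℝ} (hv : 0 ≤ v) (hvu : v ≤ u) (hz : z ∈ Set.Icc 0 u) (hzv : z ≤ v) :
    β (u - z) (v - z) ≤ Phi h β u v := by
  have H := le_phi hh hhα hβ hv hvu hz
  unfold Fz at H
  rwa [if_pos hzv] at H

lemma edge_le_phi (hh : 0 ≤ h) (hhα : h ≤ α) (hβ : MemBLip α β)
    {u v z : ℝ} (hv : 0 ≤ v) (hvu : v ≤ u) (hz : z ∈ Set.Icc 0 u) (hvz : v ≤ z) :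
    h * (z - v) + β (u - z) 0 ≤ Phi h β u v := by
  have H := le_phi hh hhα hβ hv hvu hz
  unfold Fz at H
  split_ifs at H with hle
  · have hzv : z = v := le_antisymm hle hvz
    subst hzv
    simpa using H
  · exact H

lemma beta_le_phi (hh : 0 ≤ h) (hhα : h ≤ α) (hβ : MemBLip α β)
    {u v : ℝ} (hv : 0 ≤ v) (hvu : v ≤ u) :
    β u v ≤ Phi h β u v := by
  have H := le_phi hh hhα hβ (z := 0) hv hvu ⟨le_rfl, hv.trans hvu⟩
  unfold Fz at H
  rw [if_pos hv, sub_zero, sub_zero] at H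
  exact H

lemma phi_zero (hh : 0 ≤ h) (hhα : h ≤ α) (hβ : MemBLip α β) :
    ∀ u, 0 ≤ u → Phi h β u u = 0 := by
  intro u hu
  refine le_antisymm ?_ ?_
  · apply phi_le hu le_rfl
    intro z ⟨hz0, hzu⟩
    unfold Fz
    rw [if_pos hzu, hβ.1.1 (u - z) (by linarith)]
  · have H := beta_le_phi hh hhα hβ hu le_rfl
    rwa [hβ.1.1 u hu] at H

lemma phi_nonneg (hh : 0 ≤ h) (hhα : h ≤ α) (hβ : MemBLip α β) :
    ∀ u v, 0 ≤ v → v ≤ u → 0 ≤ Phi h β u v := fun u v hv hvu =>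
  (hβ.1.2.1 u v hv hvu).trans (beta_le_phi hh hhα hβ hv hvu)

lemma phi_subadd (hh : 0 ≤ h) (hhα : h ≤ α) (hβ : MemBLip α β) :
    ∀ u w v, 0 ≤ v → v ≤ w → w ≤ u →
      Phi h β u v ≤ Phi h β u w + Phi h β w v := by
  intro u w v hv hvw hwu
  obtain ⟨⟨hzero, hnn, hsub, hinc, hdec⟩, hlip⟩ := id hβ
  apply phi_le hv (hvw.trans hwu)
  rintro z ⟨hz0, hzu⟩
  unfold Fz
  split_ifs with hzv
  · have h1 : β (u - z) (v - z) ≤ β (u - z) (w - z) + β (w - z) (v - z) :=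
      hsub (u - z) (w - z) (v - z) (by linarith) (by linarith) (by linarith)
    have h2 : β (u - z) (w - z) ≤ Phi h β u w :=
      diag_le_phi hh hhα hβ (by linarith) (by linarith) ⟨hz0, hzu⟩ (by linarith)
    have h3 : β (w - z) (v - z) ≤ Phi h β w v :=
      diag_le_phi hh hhα hβ hv hvw ⟨hz0, by linarith⟩ hzv
    linarith
  · push_neg at hzv
    rcases le_or_gt z w with hzw | hzw
    · have h1 : β (u - z) 0 ≤ β (u - z) (w - z) + β (w - z) 0 :=
        hsub (u - z) (w - z) 0 le_rfl (by linarith) (by linarith)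
      have h2 : β (u - z) (w - z) ≤ Phi h β u w :=
        diag_le_phi hh hhα hβ (by linarith) (by linarith) ⟨hz0, hzu⟩ hzw
      have h3 : h * (z - v) + β (w - z) 0 ≤ Phi h β w v :=
        edge_le_phi hh hhα hβ hv hvw ⟨hz0, hzw⟩ hzv.le
      linarith
    · have h2 : h * (z - w) + β (u - z) 0 ≤ Phi h β u w :=
        edge_le_phi hh hhα hβ (by linarith) hwu ⟨hz0, hzu⟩ hzw.le
      have h3 : h * (w - w) + β (w - w) 0 ≤ Phi h β w v := by
        have := edge_le_phi hh hhα hβ (z := w) hv hvw ⟨by linarith, le_rfl⟩ hvw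
        have h4 : h * (w - v) + β (w - w) 0 ≤ Phi h β w v := this
        have h5 : 0 ≤ h * (w - v) := mul_nonneg hh (by linarith)
        nlinarith [h4]
      have h6 : β (w - w) 0 = 0 := by rw [sub_self]; exact hzero 0 le_rfl
      have h7 : h * (w - v) + β (w - w) 0 ≤ Phi h β w v :=
        edge_le_phi hh hhα hβ (z := w) hv hvw ⟨by linarith, le_rfl⟩ hvw
      have h8 : h * (z - v) = h * (z - w) + h * (w - v) := by ring
      linarith

lemma phi_inc (hh : 0 ≤ h) (hhα : h ≤ α) (hβ : MemBLip α β) :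
    ∀ u w v, 0 ≤ v → v ≤ w → w ≤ u → Phi h β w v ≤ Phi h β u v := by
  intro u w v hv hvw hwu
  obtain ⟨⟨hzero, hnn, hsub, hinc, hdec⟩, hlip⟩ := id hβ
  apply phi_le hv hvw
  rintro z ⟨hz0, hzw⟩
  unfold Fz
  split_ifs with hzv
  · have h1 : β (w - z) (v - z) ≤ β (u - z) (v - z) :=
      hinc (u - z) (w - z) (v - z) (by linarith) (by linarith) (by linarith)
    have h2 := diag_le_phi hh hhα hβ (u := u) hv (by linarith) ⟨hz0, by linarith⟩ hzv
    linarith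
  · push_neg at hzv
    have h1 : β (w - z) 0 ≤ β (u - z) 0 :=
      hinc (u - z) (w - z) 0 le_rfl (by linarith) (by linarith)
    have h2 := edge_le_phi hh hhα hβ (u := u) hv (by linarith) ⟨hz0, by linarith⟩ hzv.le
    linarith

lemma phi_dec (hh : 0 ≤ h) (hhα : h ≤ α) (hβ : MemBLip α β) :
    ∀ u w v, 0 ≤ v → v ≤ w → w ≤ u → Phi h β u w ≤ Phi h β u v := by
  intro u w v hv hvw hwu
  obtain ⟨⟨hzero, hnn, hsub, hinc, hdec⟩, hlip⟩ := id hβ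
  apply phi_le (by linarith) hwu
  rintro z ⟨hz0, hzu⟩
  unfold Fz
  split_ifs with hzw
  · rcases le_or_gt z v with hzv | hzv
    · have h1 : β (u - z) (w - z) ≤ β (u - z) (v - z) :=
        hdec (u - z) (w - z) (v - z) (by linarith) (by linarith) (by linarith)
      have h2 := diag_le_phi hh hhα hβ hv (by linarith) ⟨hz0, hzu⟩ hzv
      linarith
    · have h1 : β (u - z) (w - z) ≤ β (u - z) 0 :=
        hdec (u - z) (w - z) 0 le_rfl (by linarith) (by linarith)
      have h2 := edge_le_phi hh hhα hβ hv (by linarith) ⟨hz0, hzu⟩ hzv.le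
      have h3 : 0 ≤ h * (z - v) := mul_nonneg hh (by linarith)
      linarith
  · push_neg at hzw
    have h2 := edge_le_phi hh hhα hβ (v := v) hv (by linarith) ⟨hz0, hzu⟩ (by linarith)
    have h3 : h * (z - w) ≤ h * (z - v) :=
      mul_le_mul_of_nonneg_left (by linarith) hh
    linarith

lemma phi_lip_fst (hh : 0 ≤ h) (hhα : h ≤ α) (hβ : MemBLip α β)
    {u u' v : ℝ} (hv : 0 ≤ v) (hvu' : v ≤ u') (hu'u : u' ≤ u) :
    Phi h β u v ≤ Phi h β u' v + α * (u - u') := by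
  have hα : 0 ≤ α := hh.trans hhα
  apply phi_le hv (hvu'.trans hu'u)
  rintro z ⟨hz0, hzu⟩
  unfold Fz
  split_ifs with hzv
  · have h1 := lip' hβ (u := u - z) (v := v - z) (u' := u' - z) (v' := v - z)
      (by linarith) (by linarith) (by linarith) (by linarith)
    rw [sub_self, abs_zero, show (u - z) - (u' - z) = u - u' by ring,
      abs_of_nonneg (by linarith : (0:ℝ) ≤ u - u')] at h1
    have h2 := diag_le_phi hh hhα hβ (u := u') hv hvu' ⟨hz0, by linarith⟩ hzv
    linarith
  · push_neg at hzv
    rcases le_or_gt z u' with hzu' | hzu'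
    · have h1 := lip' hβ (u := u - z) (v := 0) (u' := u' - z) (v' := 0)
        le_rfl (by linarith) le_rfl (by linarith)
      rw [sub_self, abs_zero, show (u - z) - (u' - z) = u - u' by ring,
        abs_of_nonneg (by linarith : (0:ℝ) ≤ u - u')] at h1
      have h2 := edge_le_phi hh hhα hβ (u := u') hv hvu' ⟨hz0, hzu'⟩ hzv.le
      linarith
    · have h1 : β (u - z) 0 ≤ α * (u - z) := beta_edge_le hβ (by linarith)
      have h2 := edge_le_phi hh hhα hβ (u := u') (z := u') hv hvu' ⟨by linarith, le_rfl⟩ hvu'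
      rw [sub_self, hβ.1.1 0 le_rfl] at h2
      have h4 : h * (z - u') ≤ α * (z - u') := mul_le_mul_of_nonneg_right hhα (by linarith)
      have hsplit : h * (z - v) = h * (u' - v) + h * (z - u') := by ring
      have h5 : α * (z - u') + α * (u - z) = α * (u - u') := by ring
      linarith

lemma phi_lip_snd (hh : 0 ≤ h) (hhα : h ≤ α) (hβ : MemBLip α β)
    {u v v' : ℝ} (hv' : 0 ≤ v') (hv'v : v' ≤ v) (hvu : v ≤ u) :
    Phi h β u v' ≤ Phi h β u v + α * (v - v') := by
  have hα : 0 ≤ α := hh.trans hhα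
  apply phi_le hv' (by linarith)
  rintro z ⟨hz0, hzu⟩
  unfold Fz
  split_ifs with hzv'
  · have h1 := lip' hβ (u := u - z) (v := v' - z) (u' := u - z) (v' := v - z)
      (by linarith) (by linarith) (by linarith) (by linarith)
    rw [sub_self, abs_zero, show (v' - z) - (v - z) = v' - v by ring,
      abs_of_nonpos (by linarith : v' - v ≤ (0:ℝ))] at h1
    have h2 := diag_le_phi hh hhα hβ (v := v) (by linarith) hvu ⟨hz0, hzu⟩ (by linarith)
    linarith
  · push_neg at hzv'
    rcases le_or_gt z v with hzv | hzv
    · have h1 := lip' hβ (u := u - z) (v := 0) (u' := u - z) (v' := v - z)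
        le_rfl (by linarith) (by linarith) (by linarith)
      rw [sub_self, abs_zero, show (0:ℝ) - (v - z) = z - v by ring,
        abs_of_nonpos (by linarith : z - v ≤ (0:ℝ))] at h1
      have h2 := diag_le_phi hh hhα hβ (v := v) (by linarith) hvu ⟨hz0, hzu⟩ hzv
      have h3 : h * (z - v') ≤ α * (z - v') := mul_le_mul_of_nonneg_right hhα (by linarith)
      have h4 : α * (z - v') + α * (-(z - v)) = α * (v - v') := by ring
      linarith
    · have h2 := edge_le_phi hh hhα hβ (v := v) (by linarith) hvu ⟨hz0, hzu⟩ hzv.le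
      have hsplit : h * (z - v') = h * (z - v) + h * (v - v') := by ring
      have h4 : h * (v - v') ≤ α * (v - v') := mul_le_mul_of_nonneg_right hhα (by linarith)
      linarith

lemma phi_one_side (hh : 0 ≤ h) (hhα : h ≤ α) (hβ : MemBLip α β)
    {u v u' v' : ℝ} (hv : 0 ≤ v) (hvu : v ≤ u) (hv' : 0 ≤ v') (hvu' : v' ≤ u') :
    Phi h β u v - Phi h β u' v' ≤ α * (|u - u'| + |v - v'|) := by
  have hα : 0 ≤ α := hh.trans hhα
  set U := max u u' with hU
  set V := min v v' with hV
  have hVv' : V ≤ v' := min_le_right _ _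
  have hVv : V ≤ v := min_le_left _ _
  have hV0 : 0 ≤ V := le_min hv hv'
  have hu'U : u' ≤ u' ⊔ u := le_max_left _ _
  have huU : u ≤ U := le_max_left _ _
  have hu'U' : u' ≤ U := le_max_right _ _
  have h1 : Phi h β u v ≤ Phi h β U v := phi_inc hh hhα hβ U u v hv hvu huU
  have h2 : Phi h β U v ≤ Phi h β U V := phi_dec hh hhα hβ U v V hV0 hVv (hvu.trans huU)
  have h3 : Phi h β U V ≤ Phi h β u' V + α * (U - u') :=
    phi_lip_fst hh hhα hβ hV0 (hVv'.trans hvu') hu'U'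
  have h4 : Phi h β u' V ≤ Phi h β u' v' + α * (v' - V) :=
    phi_lip_snd hh hhα hβ hV0 hVv' hvu'
  have h5 : U - u' ≤ |u - u'| := by
    rcases le_total u u' with hc | hc
    · rw [hU, max_eq_right hc]
      simp [abs_nonneg]
    · rw [hU, max_eq_left hc]
      exact le_abs_self _
  have h6 : v' - V ≤ |v - v'| := by
    rcases le_total v v' with hc | hc
    · rw [hV, min_eq_left hc, abs_sub_comm]
      exact le_abs_self _
    · rw [hV, min_eq_right hc]
      simp [abs_nonneg]
  have h7 : α * (U - u') ≤ α * |u - u'| := mul_le_mul_of_nonneg_left h5 hα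
  have h8 : α * (v' - V) ≤ α * |v - v'| := mul_le_mul_of_nonneg_left h6 hα
  have h9 : α * |u - u'| + α * |v - v'| = α * (|u - u'| + |v - v'|) := by ring
  linarith

lemma phi_lipschitz (hh : 0 ≤ h) (hhα : h ≤ α) (hβ : MemBLip α β) :
    ∀ u v u' v', 0 ≤ v → v ≤ u → 0 ≤ v' → v' ≤ u' →
      |Phi h β u v - Phi h β u' v'| ≤ α * (|u - u'| + |v - v'|) := by
  intro u v u' v' hv hvu hv' hvu'
  rw [abs_le]
  constructor
  · have := phi_one_side hh hhα hβ hv' hvu' hv hvu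
    rw [abs_sub_comm u' u, abs_sub_comm v' v] at this
    linarith
  · exact phi_one_side hh hhα hβ hv hvu hv' hvu'

lemma phi_diag (hh : 0 ≤ h) (hhα : h ≤ α) (hβ : MemBLip α β) :
    ∀ u v z, 0 ≤ v → v ≤ u → 0 ≤ z → Phi h β u v ≤ Phi h β (u + z) (v + z) := by
  intro u v z hv hvu hz
  apply phi_le hv hvu
  rintro w ⟨hw0, hwu⟩
  unfold Fz
  split_ifs with hwv
  · have h2 := diag_le_phi hh hhα hβ (u := u + z) (v := v + z) (z := w + z)
      (by linarith) (by linarith) ⟨by linarith, by linarith⟩ (by linarith)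
    rw [show u + z - (w + z) = u - w by ring, show v + z - (w + z) = v - w by ring] at h2
    exact h2
  · push_neg at hwv
    have h2 := edge_le_phi hh hhα hβ (u := u + z) (v := v + z) (z := w + z)
      (by linarith) (by linarith) ⟨by linarith, by linarith⟩ (by linarith)
    rw [show u + z - (w + z) = u - w by ring, show w + z - (v + z) = w - v by ring] at h2
    exact h2

lemma phi_growth (hh : 0 ≤ h) (hhα : h ≤ α) (hβ : MemBLip α β) :
    ∀ u v, 0 ≤ v → v ≤ u → h * (u - v) ≤ Phi h β u 0 - Phi h β v 0 := by
  intro u v hv hvu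
  have hu : 0 ≤ u := hv.trans hvu
  have key : Phi h β v 0 ≤ Phi h β u 0 - h * (u - v) := by
    apply phi_le le_rfl hv
    rintro w ⟨hw0, hwv⟩
    unfold Fz
    split_ifs with hw
    · have hweq : w = 0 := le_antisymm hw hw0
      subst hweq
      have h2 := edge_le_phi hh hhα hβ (u := u) (v := 0) (z := u - v)
        le_rfl hu ⟨by linarith, by linarith⟩ (by linarith)
      rw [show u - (u - v) = v by ring] at h2
      simp only [sub_zero] at h2 ⊢
      linarith
    · have h2 := edge_le_phi hh hhα hβ (u := u) (v := 0) (z := w + (u - v))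
        le_rfl hu ⟨by linarith, by linarith⟩ (by linarith)
      rw [show u - (w + (u - v)) = v - w by ring] at h2
      simp only [sub_zero] at h2 ⊢
      have h3 : h * (w + (u - v)) = h * w + h * (u - v) := by ring
      linarith
  linarith

lemma phi_memBbar (hh : 0 ≤ h) (hhα : h ≤ α) (hβ : MemBLip α β) :
    MemBbar h α (Phi h β) :=
  ⟨⟨⟨phi_zero hh hhα hβ, phi_nonneg hh hhα hβ, phi_subadd hh hhα hβ,
      phi_inc hh hhα hβ, phi_dec hh hhα hβ⟩, phi_lipschitz hh hhα hβ⟩,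
    phi_diag hh hhα hβ, phi_growth hh hhα hβ⟩

lemma phi_le_of_dom (hh : 0 ≤ h) (hhα : h ≤ α) (hβ : MemBLip α β)
    {ξ : ℝ → ℝ → ℝ} (hξ : MemBbar h α ξ)
    (hdom : ∀ u v, 0 ≤ v → v ≤ u → β u v ≤ ξ u v) :
    ∀ u v, 0 ≤ v → v ≤ u → Phi h β u v ≤ ξ u v := by
  intro u v hv hvu
  obtain ⟨⟨⟨hξz, hξnn, hξsub, hξinc, hξdec⟩, hξlip⟩, hξdiag, hξgr⟩ := hξ
  apply phi_le hv hvu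
  rintro z ⟨hz0, hzu⟩
  unfold Fz
  split_ifs with hzv
  · have h1 := hdom (u - z) (v - z) (by linarith) (by linarith)
    have h2 := hξdiag (u - z) (v - z) z (by linarith) (by linarith) hz0
    rw [show u - z + z = u by ring, show v - z + z = v by ring] at h2
    linarith
  · push_neg at hzv
    have h1 := hdom (u - z) 0 le_rfl (by linarith)
    have h2 := hξgr (u - v) (u - z) (by linarith) (by linarith)
    have h3 := hξdiag (u - v) 0 v le_rfl (by linarith) hv
    rw [show u - v + v = u by ring, zero_add] at h3
    have h4 : h * (u - v - (u - z)) = h * (z - v) := by ring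
    linarith

lemma phi_id_of_memBbar (hh : 0 ≤ h) (hhα : h ≤ α)
    {β : ℝ → ℝ → ℝ} (hβb : MemBbar h α β) :
    ∀ u v, 0 ≤ v → v ≤ u → Phi h β u v = β u v := fun u v hv hvu =>
  le_antisymm
    (phi_le_of_dom hh hhα hβb.1 hβb (fun _ _ _ _ => le_rfl) u v hv hvu)
    (beta_le_phi hh hhα hβb.1 hv hvu)

end PhiAux

/-- `Φ_h(β)` is the least element of `𝓑̄_h(α)` dominating `β`; consequently `Φ_h` is a
surjective idempotent projection of `𝓑(α)` onto `𝓑̄_h(α)` which is the identity on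
`𝓑̄_h(α)`. -/
theorem Phi_least_dominating (h α : ℝ) (hh : 0 ≤ h) (hhα : h ≤ α)
    (β : ℝ → ℝ → ℝ) (hβ : MemBLip α β) :
    MemBbar h α (Phi h β) ∧
    (∀ u v, 0 ≤ v → v ≤ u → β u v ≤ Phi h β u v) ∧
    (∀ ξ : ℝ → ℝ → ℝ, MemBbar h α ξ → (∀ u v, 0 ≤ v → v ≤ u → β u v ≤ ξ u v) →
      ∀ u v, 0 ≤ v → v ≤ u → Phi h β u v ≤ ξ u v) ∧
    (MemBbar h α β → ∀ u v, 0 ≤ v → v ≤ u → Phi h β u v = β u v) ∧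
    (∀ u v, 0 ≤ v → v ≤ u → Phi h (Phi h β) u v = Phi h β u v) := by
  refine ⟨phi_memBbar hh hhα hβ, fun u v hv hvu => beta_le_phi hh hhα hβ hv hvu,
    fun ξ hξ hdom => phi_le_of_dom hh hhα hβ hξ hdom,
    fun hβb u v hv hvu => phi_id_of_memBbar hh hhα hβb u v hv hvu,
    fun u v hv hvu => phi_id_of_memBbar hh hhα (phi_memBbar hh hhα hβ) u v hv hvu⟩
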